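/- (Lemma: merging does not change the traces of a live session.) Let p be a role, T a session type and Δ a session such that {p:T} ⊎ Δ is a live session. Then for every session Δ' such that the merge Δ⋈Δ' is defined, tr({p:T} ⊎ Δ) = tr({p:T} ⊎ (Δ⋈Δ')). -/

import Mathlib

namespace MultiPartySessions

/-- An interaction: a finite nonempty set of senders, a receiver not among them,
and a message type. -/
structure Interaction (R M : Type*) where
  senders : Finset R
  receiver : R
  msg : M
  senders_nonempty : senders.Nonempty
  receiver_not_mem : receiver ∉ senders

/-- A trace is a finite list of interactions. -/
abbrev Trace (R M : Type*) := List (Interaction R M)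

/-- A language is a set of traces. -/
abbrev Lang (R M : Type*) := Set (Trace R M)

variable {R M V : Type*}

/-- Permutation closure of a language. -/
def perm (L : Lang R M) : Lang R M := {w | ∃ v ∈ L, w.Perm v}

/-- A language of traces is well formed if whenever φ·(π→p:a)·(π'→p':b)·ψ belongs to it,
either p ∈ π' ∪ {p'} or the trace with the two interactions swapped also belongs to it. -/
def WellFormedL (L : Lang R M) : Prop :=
  ∀ (φ ψ : Trace R M) (α β : Interaction R M),
    (φ ++ α :: β :: ψ) ∈ L →
    (α.receiver ∈ β.senders ∨ α.receiver = β.receiver) ∨ (φ ++ β :: α :: ψ) ∈ L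

/-- The smallest well-formed superset of a language. -/
def closure (L : Lang R M) : Lang R M :=
  {w | ∀ K : Lang R M, L ⊆ K → WellFormedL K → w ∈ K}

/-- `IsShuffle v₁ v₂ w` holds iff `w` is an interleaving of `v₁` and `v₂`. -/
inductive IsShuffle {α : Type*} : List α → List α → List α → Prop
  | nil : IsShuffle [] [] []
  | left {a : α} {l₁ l₂ l : List α} : IsShuffle l₁ l₂ l → IsShuffle (a :: l₁) l₂ (a :: l)
  | right {a : α} {l₁ l₂ l : List α} : IsShuffle l₁ l₂ l → IsShuffle l₁ (a :: l₂) (a :: l)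

/-- Shuffle of two languages. -/
def shuffleL (L₁ L₂ : Lang R M) : Lang R M :=
  {w | ∃ v₁ ∈ L₁, ∃ v₂ ∈ L₂, IsShuffle v₁ v₂ w}

/-- Elementwise concatenation of two languages. -/
def catL (L₁ L₂ : Lang R M) : Lang R M :=
  {w | ∃ v₁ ∈ L₁, ∃ v₂ ∈ L₂, w = v₁ ++ v₂}

/-- Kleene star of a language. -/
def starL (L : Lang R M) : Lang R M :=
  {w | ∃ vs : List (Trace R M), w = vs.flatten ∧ ∀ v ∈ vs, v ∈ L}

/-- Global types. -/
inductive GlobalType (R M : Type*) where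
  | skip
  | act (α : Interaction R M)
  | seq (g₁ g₂ : GlobalType R M)
  | par (g₁ g₂ : GlobalType R M)
  | alt (g₁ g₂ : GlobalType R M)
  | star (g : GlobalType R M)

/-- Trace language of a global type. -/
def trG : GlobalType R M → Lang R M
  | .skip => {[]}
  | .act a => {[a]}
  | .seq g₁ g₂ => catL (trG g₁) (trG g₂)
  | .par g₁ g₂ => shuffleL (trG g₁) (trG g₂)
  | .alt g₁ g₂ => trG g₁ ∪ trG g₂
  | .star g => starL (trG g)

/-- Pre-session types. -/
inductive PST (R M V : Type*) where
  | done
  | var (X : V)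
  | out (p : R) (a : M) (T : PST R M V)
  | inp (s : Finset R) (a : M) (T : PST R M V)
  | ichoice (T S : PST R M V)
  | echoice (T S : PST R M V)
  | mu (X : V) (T : PST R M V)

/-- Capture-avoiding simultaneous substitution of recursion variables
(intended usage: the substituted types are closed). -/
def substAll [DecidableEq V] (ρ : V → PST R M V) : PST R M V → PST R M V
  | .done => .done
  | .var X => ρ X
  | .out p a T => .out p a (substAll ρ T)
  | .inp s a T => .inp s a (substAll ρ T)
  | .ichoice T S => .ichoice (substAll ρ T) (substAll ρ S)
  | .echoice T S => .echoice (substAll ρ T) (substAll ρ S)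
  | .mu X T => .mu X (substAll (fun Y => if Y = X then .var X else ρ Y) T)

/-- One-step unfolding of a recursive type `μX.T`. -/
def unfold [DecidableEq V] (X : V) (T : PST R M V) : PST R M V :=
  substAll (fun Y => if Y = X then .mu X T else .var Y) T

/-- Free recursion variables of a pre-session type. -/
def fv : PST R M V → Set V
  | .done => ∅
  | .var X => {X}
  | .out _ _ T => fv T
  | .inp _ _ T => fv T
  | .ichoice T S => fv T ∪ fv S
  | .echoice T S => fv T ∪ fv S
  | .mu X T => fv T \ {X}

/-- `CanOut T p a T'`: `T` offers (modulo internal choice and fold/unfold)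
the top-level output `p!a` with continuation `T'`. -/
inductive CanOut [DecidableEq V] : PST R M V → R → M → PST R M V → Prop
  | out {p : R} {a : M} {T : PST R M V} : CanOut (.out p a T) p a T
  | left {T S T' : PST R M V} {p : R} {a : M} :
      CanOut T p a T' → CanOut (.ichoice T S) p a T'
  | right {T S T' : PST R M V} {p : R} {a : M} :
      CanOut S p a T' → CanOut (.ichoice T S) p a T'
  | mu {X : V} {T T' : PST R M V} {p : R} {a : M} :
      CanOut (unfold X T) p a T' → CanOut (.mu X T) p a T'

/-- `CanIn T s a T'`: `T` offers (modulo external choice and fold/unfold)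
the top-level input `s?a` with continuation `T'`. -/
inductive CanIn [DecidableEq V] : PST R M V → Finset R → M → PST R M V → Prop
  | inp {s : Finset R} {a : M} {T : PST R M V} : CanIn (.inp s a T) s a T
  | left {T S T' : PST R M V} {s : Finset R} {a : M} :
      CanIn T s a T' → CanIn (.echoice T S) s a T'
  | right {T S T' : PST R M V} {s : Finset R} {a : M} :
      CanIn S s a T' → CanIn (.echoice T S) s a T'
  | mu {X : V} {T T' : PST R M V} {s : Finset R} {a : M} :
      CanIn (unfold X T) s a T' → CanIn (.mu X T) s a T'

/-- `T` behaves as an internal choice of outputs with pairwise distinct prefixes,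
with all continuations in `K`. -/
def OutShape [DecidableEq V] (T : PST R M V) (K : Set (PST R M V)) : Prop :=
  (∃ p a T', CanOut T p a T') ∧
  (¬ ∃ s a T', CanIn T s a T') ∧
  (∀ p a T' T'', CanOut T p a T' → CanOut T p a T'' → T' = T'') ∧
  (∀ p a T', CanOut T p a T' → T' ∈ K)

/-- `T` behaves as an external choice of inputs such that `s ⊆ s'` together with equal
messages forces equal branches, with all continuations in `K`. -/
def InShape [DecidableEq V] (T : PST R M V) (K : Set (PST R M V)) : Prop :=
  (∃ s a T', CanIn T s a T') ∧
  (¬ ∃ p a T', CanOut T p a T') ∧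
  (∀ s a T' s' T'', CanIn T s a T' → CanIn T s' a T'' → s ⊆ s' → s = s' ∧ T' = T'') ∧
  (∀ s a T', CanIn T s a T' → T' ∈ K)

/-- Session types: pre-session types that (coinductively) are either `end`, an internal
choice of outputs with pairwise distinct prefixes, or an external choice of inputs
satisfying the separation condition, all of whose continuations are again session types. -/
def IsST [DecidableEq V] (T : PST R M V) : Prop :=
  ∃ K : Set (PST R M V), T ∈ K ∧
    ∀ U ∈ K, U = PST.done ∨ OutShape U K ∨ InShape U K

/-- A buffer: a FIFO queue of message types for each ordered pair (sender, receiver). -/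
abbrev Buffer (R M : Type*) := R → R → List M

/-- A session environment, represented as a total map which is `end` outside its domain. -/
abbrev Session (R M V : Type*) := R → PST R M V

/-- The empty buffer. -/
def emptyBuf : Buffer R M := fun _ _ => []

/-- The session has a finite domain. -/
def FinDom (Δ : Session R M V) : Prop := {p | Δ p ≠ PST.done}.Finite

/-- Every role is successfully terminated. -/
def Ended (Δ : Session R M V) : Prop := ∀ p, Δ p = PST.done

/-- One reduction step of a configuration, labelled by `none` (an output, which enqueues
a message) or by `some` interaction (an input, which dequeues one message of the given
type from each sender in the interaction). -/
inductive Step [DecidableEq R] [DecidableEq V] :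
    Buffer R M → Session R M V → Option (Interaction R M) → Buffer R M → Session R M V → Prop
  | output {B : Buffer R M} {Δ : Session R M V} {p q : R} {a : M} {T' : PST R M V}
      (B' : Buffer R M) :
      CanOut (Δ p) q a T' →
      B' p q = B p q ++ [a] →
      (∀ s r, ¬(s = p ∧ r = q) → B' s r = B s r) →
      Step B Δ none B' (Function.update Δ p T')
  | input {B : Buffer R M} {Δ : Session R M V} {T' : PST R M V}
      (α : Interaction R M) (B' : Buffer R M) :
      CanIn (Δ α.receiver) α.senders α.msg T' →
      (∀ q ∈ α.senders, B q α.receiver = α.msg :: B' q α.receiver) →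
      (∀ s r, ¬(s ∈ α.senders ∧ r = α.receiver) → B' s r = B s r) →
      Step B Δ (some α) B' (Function.update Δ α.receiver T')

/-- Finite reduction sequences; the trace records the labels of the input steps, in order. -/
inductive Steps [DecidableEq R] [DecidableEq V] :
    Buffer R M → Session R M V → Trace R M → Buffer R M → Session R M V → Prop
  | refl {B : Buffer R M} {Δ : Session R M V} : Steps B Δ [] B Δ
  | tau {B B' B'' : Buffer R M} {Δ Δ' Δ'' : Session R M V} {φ : Trace R M} :
      Step B Δ none B' Δ' → Steps B' Δ' φ B'' Δ'' → Steps B Δ φ B'' Δ''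
  | act {B B' B'' : Buffer R M} {Δ Δ' Δ'' : Session R M V} {α : Interaction R M}
      {φ : Trace R M} :
      Step B Δ (some α) B' Δ' → Steps B' Δ' φ B'' Δ'' → Steps B Δ (α :: φ) B'' Δ''

/-- A live session: every reachable configuration can reach a configuration with empty
buffer where every participant has successfully terminated. -/
def Live [DecidableEq R] [DecidableEq V] (Δ : Session R M V) : Prop :=
  ∀ φ B' Δ', Steps emptyBuf Δ φ B' Δ' →
    ∃ ψ Δ'', Steps B' Δ' ψ emptyBuf Δ'' ∧ Ended Δ''

/-- Traces of a session (empty if the session is not live). -/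
def trS [DecidableEq R] [DecidableEq V] (Δ : Session R M V) : Lang R M :=
  {φ | Live Δ ∧ ∃ Δ'', Steps emptyBuf Δ φ emptyBuf Δ'' ∧ Ended Δ''}

/-- The environment transformation performed by projecting a single interaction. -/
def actionUpd [DecidableEq R] (α : Interaction R M) (Δ : Session R M V) : Session R M V :=
  fun r =>
    if r = α.receiver then PST.inp α.senders α.msg (Δ r)
    else if r ∈ α.senders then PST.out α.receiver α.msg (Δ r)
    else Δ r

/-- The semantic projection judgment `Δ ⊢ G : Δ'`. -/
inductive SP [DecidableEq R] [DecidableEq V] :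
    Session R M V → GlobalType R M → Session R M V → Prop
  | skip {Δ : Session R M V} : SP Δ .skip Δ
  | action {Δ : Session R M V} (α : Interaction R M) : SP Δ (.act α) (actionUpd α Δ)
  | seq {Δ Δ' Δ'' : Session R M V} {g₁ g₂ : GlobalType R M} :
      SP Δ g₂ Δ' → SP Δ' g₁ Δ'' → SP Δ (.seq g₁ g₂) Δ''
  | alt {Δ Δ₁ Δ₂ : Session R M V} {g₁ g₂ : GlobalType R M} (p : R) :
      SP Δ g₁ Δ₁ → SP Δ g₂ Δ₂ → (∀ q, q ≠ p → Δ₁ q = Δ₂ q) →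
      SP Δ (.alt g₁ g₂) (Function.update Δ₁ p (PST.ichoice (Δ₁ p) (Δ₂ p)))
  | iter {Δ : Session R M V} {g : GlobalType R M} (p : R) (T₁ T₂ : PST R M V) :
      SP (Function.update Δ p (PST.ichoice T₁ T₂)) g (Function.update Δ p T₁) →
      SP (Function.update Δ p T₂) (.star g) (Function.update Δ p (PST.ichoice T₁ T₂))
  | subsume {Δ Δ' Δ'' : Session R M V} {g g' : GlobalType R M} :
      SP Δ g' Δ' →
      trG g' ⊆ trG g → trG g ⊆ perm (trG g') →
      trS Δ'' ⊆ trS Δ' → trS Δ' ⊆ perm (trS Δ'') →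
      SP Δ g Δ''

/-- The projection of a global type from the initial environment assigning `end`
to every participant. -/
def SProot [DecidableEq R] [DecidableEq V] (g : GlobalType R M) (Δ : Session R M V) : Prop :=
  SP (fun _ => PST.done) g Δ

/-- `OccInp p a T`: an input prefix `p?a` occurs (syntactically) in `T`. -/
inductive OccInp (p : R) (a : M) : PST R M V → Prop
  | here {s : Finset R} {T : PST R M V} : p ∈ s → OccInp p a (.inp s a T)
  | inp {s : Finset R} {b : M} {T : PST R M V} : OccInp p a T → OccInp p a (.inp s b T)
  | out {q : R} {b : M} {T : PST R M V} : OccInp p a T → OccInp p a (.out q b T)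
  | ichoiceL {T S : PST R M V} : OccInp p a T → OccInp p a (.ichoice T S)
  | ichoiceR {T S : PST R M V} : OccInp p a S → OccInp p a (.ichoice T S)
  | echoiceL {T S : PST R M V} : OccInp p a T → OccInp p a (.echoice T S)
  | echoiceR {T S : PST R M V} : OccInp p a S → OccInp p a (.echoice T S)
  | mu {X : V} {T : PST R M V} : OccInp p a T → OccInp p a (.mu X T)

/-- One step of the compatibility relation, relative to a set `K` of types already
assumed compatible with the input `p?a`. -/
def CompatStep [DecidableEq V] (p : R) (a : M) (K : Set (PST R M V)) (T : PST R M V) : Prop :=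
  (¬ OccInp p a T) ∨
  ((∃ q b T', CanOut T q b T') ∧ ∀ q b T', CanOut T q b T' → T' ∈ K) ∨
  ((∃ s b T', CanIn T s b T') ∧
    ∀ s b T', CanIn T s b T' → (p ∈ s ∧ a ≠ b) ∨ (p ∉ s ∧ T' ∈ K))

/-- The input `p?a` is compatible with the session type `T` (greatest fixed point). -/
def Compat [DecidableEq V] (p : R) (a : M) (T : PST R M V) : Prop :=
  ∃ K : Set (PST R M V), T ∈ K ∧ ∀ U ∈ K, CompatStep p a K U

/-- The input `s?a` is compatible with `T` if `p?a` is compatible with `T` for some `p ∈ s`. -/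
def CompatIn [DecidableEq V] (s : Finset R) (a : M) (T : PST R M V) : Prop :=
  ∃ p ∈ s, Compat p a T

/-- Output case of one step of the merge relation. -/
def MergeStepOut [DecidableEq V] (K : Set (PST R M V × PST R M V × PST R M V))
    (T S U : PST R M V) : Prop :=
  (∃ p a T', CanOut T p a T') ∧
  (∀ p a, (∃ T', CanOut T p a T') ↔ (∃ S', CanOut S p a S')) ∧
  (∀ p a, (∃ T', CanOut T p a T') ↔ (∃ U', CanOut U p a U')) ∧
  (∀ p a T' S' U', CanOut T p a T' → CanOut S p a S' → CanOut U p a U' → (T', S', U') ∈ K)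

/-- Input case of one step of the merge relation: `T` and `S` are compatible external
choices and `U` combines the common branches (merged) with the residual branches of
each side. -/
def MergeStepIn [DecidableEq V] (K : Set (PST R M V × PST R M V × PST R M V))
    (T S U : PST R M V) : Prop :=
  (∃ s a T', CanIn T s a T') ∧
  (∃ s a S', CanIn S s a S') ∧
  (∀ s a T', CanIn T s a T' → (∃ S', CanIn S s a S') ∨ CompatIn s a S) ∧
  (∀ s a S', CanIn S s a S' → (∃ T', CanIn T s a T') ∨ CompatIn s a T) ∧
  (∀ s a, (∃ U', CanIn U s a U') ↔ ((∃ T', CanIn T s a T') ∨ (∃ S', CanIn S s a S'))) ∧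
  (∀ s a T' S' U', CanIn T s a T' → CanIn S s a S' → CanIn U s a U' → (T', S', U') ∈ K) ∧
  (∀ s a T' U', CanIn T s a T' → ¬(∃ S', CanIn S s a S') → CanIn U s a U' → U' = T') ∧
  (∀ s a S' U', CanIn S s a S' → ¬(∃ T', CanIn T s a T') → CanIn U s a U' → U' = S')

/-- One step of the merge relation. -/
def MergeStep [DecidableEq V] (K : Set (PST R M V × PST R M V × PST R M V))
    (T S U : PST R M V) : Prop :=
  (T = PST.done ∧ S = PST.done ∧ U = PST.done) ∨
  (∃ X, T = PST.var X ∧ S = PST.var X ∧ U = PST.var X) ∨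
  MergeStepOut K T S U ∨ MergeStepIn K T S U

/-- `MergeST T S U`: `U` is the merge `T ⋈ S` (coinductively, as greatest fixed point). -/
def MergeST [DecidableEq V] (T S U : PST R M V) : Prop :=
  ∃ K : Set (PST R M V × PST R M V × PST R M V), (T, S, U) ∈ K ∧
    ∀ x ∈ K, MergeStep K x.1 x.2.1 x.2.2

/-- The algorithmic projection judgment `Δ ⊢A G : Δ'`. -/
inductive AP [DecidableEq R] [DecidableEq V] :
    Session R M V → GlobalType R M → Session R M V → Prop
  | skip {Δ : Session R M V} : AP Δ .skip Δ
  | action {Δ : Session R M V} (α : Interaction R M) : AP Δ (.act α) (actionUpd α Δ)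
  | seq {Δ Δ' Δ'' : Session R M V} {g₁ g₂ : GlobalType R M} :
      AP Δ g₂ Δ' → AP Δ' g₁ Δ'' → AP Δ (.seq g₁ g₂) Δ''
  | alt {Δ Δ₁ Δ₂ : Session R M V} {g₁ g₂ : GlobalType R M} (p : R) (Δm : Session R M V) :
      AP Δ g₁ Δ₁ → AP Δ g₂ Δ₂ →
      (∀ q, q ≠ p → MergeST (Δ₁ q) (Δ₂ q) (Δm q)) →
      AP Δ (.alt g₁ g₂) (Function.update Δm p (PST.ichoice (Δ₁ p) (Δ₂ p)))
  | iter {Δ : Session R M V} {g : GlobalType R M}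
      (p : R) (I : Finset R) (X : V) (Xv : R → V)
      (T S : PST R M V) (Ti Si Mi : R → PST R M V)
      (hpI : p ∉ I)
      (hinj : ∀ q ∈ I, ∀ q' ∈ I, Xv q = Xv q' → q = q')
      (hXXv : ∀ q ∈ I, X ≠ Xv q)
      (hXT : X ∉ fv T) (hXTi : ∀ q ∈ I, X ∉ fv (Ti q)) (hXΔ : ∀ r, X ∉ fv (Δ r))
      (hXvT : ∀ q ∈ I, Xv q ∉ fv T) (hXvTi : ∀ q ∈ I, ∀ q' ∈ I, Xv q ∉ fv (Ti q'))
      (hXvΔ : ∀ q ∈ I, ∀ r, Xv q ∉ fv (Δ r))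
      (hmerge : ∀ q ∈ I, MergeST (Ti q) (Si q) (Mi q)) :
      AP (fun r => if r = p then PST.var X else if r ∈ I then PST.var (Xv r) else Δ r) g
         (fun r => if r = p then S else if r ∈ I then Si r else Δ r) →
      AP (fun r => if r = p then T else if r ∈ I then Ti r else Δ r) (.star g)
         (fun r => if r = p then PST.mu X (PST.ichoice T S)
                   else if r ∈ I then PST.mu (Xv r) (Mi r) else Δ r)

/-- The algorithmic projection of a global type from the initial environment
assigning `end` to every participant. -/
def AProot [DecidableEq R] [DecidableEq V] (g : GlobalType R M) (Δ : Session R M V) : Prop :=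
  AP (fun _ => PST.done) g Δ

/-- A substitution mapping every recursion variable to a closed session type. -/
def ClosedSTSubst [DecidableEq V] (ρ : V → PST R M V) : Prop :=
  ∀ X, fv (ρ X) = ∅ ∧ IsST (ρ X)

/-- Pointwise application of a substitution to a session environment. -/
def applySub [DecidableEq V] (ρ : V → PST R M V) (Δ : Session R M V) : Session R M V :=
  fun p => substAll ρ (Δ p)

/-- Implementation pre-order: `ipre L' L` means `L' ⊑ L`, i.e. `L ⊆ L' ⊆ perm L`. -/
def ipre (L' L : Lang R M) : Prop := L ⊆ L' ∧ L' ⊆ perm L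

/-- A language is regular if it is accepted by a DFA with finitely many states. -/
def IsRegularL (L : Lang R M) : Prop :=
  ∃ (σ : Type) (_ : Fintype σ) (dfa : DFA (Interaction R M) σ), dfa.accepts = L


section MergeAux

set_option linter.unusedSectionVars false

variable {R M V : Type*} [DecidableEq R] [DecidableEq V]

/-! ### Basic impossibility and exclusivity lemmas -/

lemma canOut_done {p : R} {a : M} {T' : PST R M V} : ¬ CanOut (PST.done : PST R M V) p a T' :=
  fun h => by cases h

lemma canOut_var {X : V} {p : R} {a : M} {T' : PST R M V} :
    ¬ CanOut (PST.var X : PST R M V) p a T' := fun h => by cases h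

lemma canIn_done {s : Finset R} {a : M} {T' : PST R M V} :
    ¬ CanIn (PST.done : PST R M V) s a T' := fun h => by cases h

lemma canIn_var {X : V} {s : Finset R} {a : M} {T' : PST R M V} :
    ¬ CanIn (PST.var X : PST R M V) s a T' := fun h => by cases h

/-- A pre-session type cannot simultaneously offer an output and an input. -/
lemma canOut_canIn_excl {T : PST R M V} {p : R} {a : M} {T' : PST R M V}
    {s : Finset R} {b : M} {S' : PST R M V}
    (ho : CanOut T p a T') (hi : CanIn T s b S') : False := by
  induction ho generalizing s b S' with
  | out => cases hi
  | left _ ih => cases hi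
  | right _ ih => cases hi
  | mu _ ih => cases hi with | mu h' => exact ih h'

/-! ### Occurrence lemmas -/

lemma occ_substAll {p : R} {a : M} {T : PST R M V} :
    ∀ {ρ : V → PST R M V}, OccInp p a (substAll ρ T) →
      OccInp p a T ∨ ∃ X, OccInp p a (ρ X) := by
  induction T with
  | done => intro ρ h; rw [substAll] at h; cases h
  | var X => intro ρ h; rw [substAll] at h; exact Or.inr ⟨X, h⟩
  | out q b T ih =>
      intro ρ h; rw [substAll] at h
      cases h with
      | out h' => exact (ih h').imp OccInp.out id
  | inp s b T ih =>
      intro ρ h; rw [substAll] at h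
      cases h with
      | here hs => exact Or.inl (OccInp.here hs)
      | inp h' => exact (ih h').imp OccInp.inp id
  | ichoice T S ihT ihS =>
      intro ρ h; rw [substAll] at h
      cases h with
      | ichoiceL h' => exact (ihT h').imp OccInp.ichoiceL id
      | ichoiceR h' => exact (ihS h').imp OccInp.ichoiceR id
  | echoice T S ihT ihS =>
      intro ρ h; rw [substAll] at h
      cases h with
      | echoiceL h' => exact (ihT h').imp OccInp.echoiceL id
      | echoiceR h' => exact (ihS h').imp OccInp.echoiceR id
  | mu X T ih =>
      intro ρ h; rw [substAll] at h
      cases h with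
      | mu h' =>
          rcases ih h' with h'' | ⟨Y, hY⟩
          · exact Or.inl (OccInp.mu h'')
          · by_cases hYX : Y = X
            · rw [if_pos hYX] at hY; cases hY
            · rw [if_neg hYX] at hY; exact Or.inr ⟨Y, hY⟩

lemma occ_unfold_down {p : R} {a : M} {X : V} {T : PST R M V}
    (h : OccInp p a (unfold X T)) : OccInp p a T := by
  rcases occ_substAll h with h' | ⟨Y, hY⟩
  · exact h'
  · by_cases hYX : Y = X
    · rw [if_pos hYX] at hY; cases hY with | mu h'' => exact h''
    · rw [if_neg hYX] at hY; cases hY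

lemma notOcc_unfold {p : R} {a : M} {X : V} {T : PST R M V}
    (h : ¬ OccInp p a (PST.mu X T)) : ¬ OccInp p a (unfold X T) :=
  fun hc => h (OccInp.mu (occ_unfold_down hc))

lemma notOcc_canOut {p : R} {a : M} {T : PST R M V} {r : R} {b : M} {T' : PST R M V}
    (h : ¬ OccInp p a T) (ho : CanOut T r b T') : ¬ OccInp p a T' := by
  induction ho with
  | out => exact fun hc => h (OccInp.out hc)
  | left _ ih => exact ih (fun hc => h (OccInp.ichoiceL hc))
  | right _ ih => exact ih (fun hc => h (OccInp.ichoiceR hc))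
  | mu _ ih => exact ih (notOcc_unfold h)

lemma notOcc_canIn {p : R} {a : M} {T : PST R M V} {s : Finset R} {b : M} {T' : PST R M V}
    (h : ¬ OccInp p a T) (hi : CanIn T s b T') : ¬ OccInp p a T' := by
  induction hi with
  | inp => exact fun hc => h (OccInp.inp hc)
  | left _ ih => exact ih (fun hc => h (OccInp.echoiceL hc))
  | right _ ih => exact ih (fun hc => h (OccInp.echoiceR hc))
  | mu _ ih => exact ih (notOcc_unfold h)

lemma occ_of_canIn {p : R} {a : M} {T : PST R M V} {s : Finset R} {T' : PST R M V}
    (hi : CanIn T s a T') (hp : p ∈ s) : OccInp p a T := by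
  induction hi with
  | inp => exact OccInp.here hp
  | left _ ih => exact OccInp.echoiceL (ih hp)
  | right _ ih => exact OccInp.echoiceR (ih hp)
  | mu _ ih => exact OccInp.mu (occ_unfold_down (ih hp))

/-! ### Compatibility lemmas -/

lemma compat_notOcc {p : R} {a : M} {T : PST R M V} (h : ¬ OccInp p a T) : Compat p a T :=
  ⟨{U | ¬ OccInp p a U}, h, fun _ hU => Or.inl hU⟩

lemma compat_canOut {p : R} {a : M} {T : PST R M V} {r : R} {b : M} {T' : PST R M V}
    (hc : Compat p a T) (ho : CanOut T r b T') : Compat p a T' := by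
  obtain ⟨K, hTK, hK⟩ := hc
  rcases hK T hTK with hocc | ⟨_, hall⟩ | ⟨⟨s, c, S', hci⟩, _⟩
  · exact compat_notOcc (notOcc_canOut hocc ho)
  · exact ⟨K, hall r b T' ho, hK⟩
  · exact (canOut_canIn_excl ho hci).elim

lemma compat_canIn_mem {p : R} {a : M} {T : PST R M V} {s : Finset R} {b : M} {T' : PST R M V}
    (hc : Compat p a T) (hi : CanIn T s b T') (hp : p ∈ s) : b ≠ a := by
  obtain ⟨K, hTK, hK⟩ := hc
  rcases hK T hTK with hocc | ⟨⟨q, c, T₀, ho⟩, _⟩ | ⟨_, hall⟩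
  · intro hba; subst hba; exact hocc (occ_of_canIn hi hp)
  · exact (canOut_canIn_excl ho hi).elim
  · rcases hall s b T' hi with ⟨_, hne⟩ | ⟨hnp, _⟩
    · exact fun hba => hne hba.symm
    · exact absurd hp hnp

lemma compat_canIn_notMem {p : R} {a : M} {T : PST R M V} {s : Finset R} {b : M} {T' : PST R M V}
    (hc : Compat p a T) (hi : CanIn T s b T') (hnp : p ∉ s) : Compat p a T' := by
  obtain ⟨K, hTK, hK⟩ := hc
  rcases hK T hTK with hocc | ⟨⟨q, c, T₀, ho⟩, _⟩ | ⟨_, hall⟩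
  · exact compat_notOcc (notOcc_canIn hocc hi)
  · exact (canOut_canIn_excl ho hi).elim
  · rcases hall s b T' hi with ⟨hp, _⟩ | ⟨_, hmem⟩
    · exact absurd hp hnp
    · exact ⟨K, hmem, hK⟩

/-! ### The simulation relation -/

/-- `MRel T U`: `U` equals `T` or is a merge of `T` with some other type. -/
def MRel (T U : PST R M V) : Prop := U = T ∨ ∃ S, MergeST T S U

lemma mRel_out_fwd {T U : PST R M V} {r : R} {b : M} {T' : PST R M V}
    (hrel : MRel T U) (h : CanOut T r b T') :
    ∃ U', CanOut U r b U' ∧ MRel T' U' := by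
  rcases hrel with rfl | ⟨S, K, hmem, hK⟩
  · exact ⟨T', h, Or.inl rfl⟩
  · rcases hK _ hmem with ⟨hT, _, _⟩ | ⟨X, hT, _, _⟩ | ⟨_, h2, h3, h4⟩ |
      ⟨⟨s, c, T₀, hci⟩, _⟩
    · rw [show T = PST.done from hT] at h; exact (canOut_done h).elim
    · rw [show T = PST.var X from hT] at h; exact (canOut_var h).elim
    · obtain ⟨S', hS⟩ := (h2 r b).1 ⟨T', h⟩
      obtain ⟨U', hU⟩ := (h3 r b).1 ⟨T', h⟩
      exact ⟨U', hU, Or.inr ⟨S', K, h4 r b T' S' U' h hS hU, hK⟩⟩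
    · exact (canOut_canIn_excl h hci).elim

lemma mRel_out_bwd {T U : PST R M V} {r : R} {b : M} {U' : PST R M V}
    (hrel : MRel T U) (h : CanOut U r b U') :
    ∃ T', CanOut T r b T' ∧ MRel T' U' := by
  rcases hrel with rfl | ⟨S, K, hmem, hK⟩
  · exact ⟨U', h, Or.inl rfl⟩
  · rcases hK _ hmem with ⟨_, _, hU⟩ | ⟨X, _, _, hU⟩ | ⟨_, h2, h3, h4⟩ |
      ⟨⟨s, c, T₀, hci⟩, _, _, _, h5, _⟩
    · rw [show U = PST.done from hU] at h; exact (canOut_done h).elim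
    · rw [show U = PST.var X from hU] at h; exact (canOut_var h).elim
    · obtain ⟨T', hT⟩ := (h3 r b).2 ⟨U', h⟩
      obtain ⟨S', hS⟩ := (h2 r b).1 ⟨T', hT⟩
      exact ⟨T', hT, Or.inr ⟨S', K, h4 r b T' S' U' hT hS h, hK⟩⟩
    · obtain ⟨U₀, hU₀⟩ := (h5 s c).2 (Or.inl ⟨T₀, hci⟩)
      exact (canOut_canIn_excl h hU₀).elim

lemma mRel_in_fwd {T U : PST R M V} {s : Finset R} {b : M} {T' : PST R M V}
    (hrel : MRel T U) (h : CanIn T s b T') :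
    ∃ U', CanIn U s b U' ∧ MRel T' U' := by
  rcases hrel with rfl | ⟨S, K, hmem, hK⟩
  · exact ⟨T', h, Or.inl rfl⟩
  · rcases hK _ hmem with ⟨hT, _, _⟩ | ⟨X, hT, _, _⟩ | ⟨⟨q, c, T₀, ho⟩, _⟩ |
      ⟨_, _, _, _, h5, h6, h7, _⟩
    · rw [show T = PST.done from hT] at h; exact (canIn_done h).elim
    · rw [show T = PST.var X from hT] at h; exact (canIn_var h).elim
    · exact (canOut_canIn_excl ho h).elim
    · obtain ⟨U', hU⟩ := (h5 s b).2 (Or.inl ⟨T', h⟩)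
      by_cases hS : ∃ S', CanIn S s b S'
      · obtain ⟨S', hS'⟩ := hS
        exact ⟨U', hU, Or.inr ⟨S', K, h6 s b T' S' U' h hS' hU, hK⟩⟩
      · exact ⟨U', hU, Or.inl (h7 s b T' U' h hS hU)⟩

lemma mRel_in_bwd {T U : PST R M V} {s : Finset R} {b : M} {U' : PST R M V}
    (hrel : MRel T U) (h : CanIn U s b U') :
    (∃ T', CanIn T s b T' ∧ MRel T' U') ∨ CompatIn s b T := by
  rcases hrel with rfl | ⟨S, K, hmem, hK⟩
  · exact Or.inl ⟨U', h, Or.inl rfl⟩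
  · rcases hK _ hmem with ⟨_, _, hU⟩ | ⟨X, _, _, hU⟩ | ⟨⟨q, c, T₀, ho⟩, _, h3, _⟩ |
      ⟨_, _, _, h4, h5, h6, h7, _⟩
    · rw [show U = PST.done from hU] at h; exact (canIn_done h).elim
    · rw [show U = PST.var X from hU] at h; exact (canIn_var h).elim
    · obtain ⟨U₀, hU₀⟩ := (h3 q c).1 ⟨T₀, ho⟩
      exact (canOut_canIn_excl hU₀ h).elim
    · by_cases hT : ∃ T', CanIn T s b T'
      · obtain ⟨T', hT'⟩ := hT
        by_cases hS : ∃ S', CanIn S s b S'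
        · obtain ⟨S', hS'⟩ := hS
          exact Or.inl ⟨T', hT', Or.inr ⟨S', K, h6 s b T' S' U' hT' hS' h, hK⟩⟩
        · exact Or.inl ⟨T', hT', Or.inl (h7 s b T' U' hT' hS h)⟩
      · rcases (h5 s b).1 ⟨U', h⟩ with h' | ⟨S', hS'⟩
        · exact absurd h' hT
        · rcases h4 s b S' hS' with h' | hcpt
          · exact absurd h' hT
          · exact Or.inr hcpt

lemma mRel_done_fwd {T U : PST R M V} (hrel : MRel T U) (h : T = PST.done) :
    U = PST.done := by
  subst h
  rcases hrel with rfl | ⟨S, K, hmem, hK⟩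
  · rfl
  · rcases hK _ hmem with ⟨_, _, hU⟩ | ⟨X, hT, _, _⟩ | ⟨⟨q, c, T₀, ho⟩, _⟩ |
      ⟨⟨s, c, T₀, hci⟩, _⟩
    · exact hU
    · cases hT
    · exact (canOut_done ho).elim
    · exact (canIn_done hci).elim

lemma mRel_done_bwd {T U : PST R M V} (hrel : MRel T U) (h : U = PST.done) :
    T = PST.done := by
  subst h
  rcases hrel with h | ⟨S, K, hmem, hK⟩
  · exact h.symm
  · rcases hK _ hmem with ⟨hT, _, _⟩ | ⟨X, _, _, hU⟩ | ⟨⟨q, c, T₀, ho⟩, _, h3, _⟩ |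
      ⟨⟨s, c, T₀, hci⟩, _, _, _, h5, _⟩
    · exact hT
    · cases hU
    · obtain ⟨U₀, hU₀⟩ := (h3 q c).1 ⟨T₀, ho⟩
      exact (canOut_done hU₀).elim
    · obtain ⟨U₀, hU₀⟩ := (h5 s c).2 (Or.inl ⟨T₀, hci⟩)
      exact (canIn_done hU₀).elim

/-! ### Liveness from an arbitrary configuration -/

/-- Liveness starting from an arbitrary configuration. -/
def LiveFrom (B : Buffer R M) (Δ : Session R M V) : Prop :=
  ∀ φ B' Δ', Steps B Δ φ B' Δ' → ∃ ψ Δ'', Steps B' Δ' ψ emptyBuf Δ'' ∧ Ended Δ''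

lemma liveFrom_step {B : Buffer R M} {Δ : Session R M V} {ℓ : Option (Interaction R M)}
    {B₁ : Buffer R M} {Δ₁ : Session R M V}
    (h : Step B Δ ℓ B₁ Δ₁) (hl : LiveFrom B Δ) : LiveFrom B₁ Δ₁ := by
  intro φ B' Δ' hs
  cases ℓ with
  | none => exact hl φ B' Δ' (Steps.tau h hs)
  | some α => exact hl (α :: φ) B' Δ' (Steps.act h hs)

/-! ### The blocked-message lemma -/

lemma blocked_step {p : R} {a : M} {B : Buffer R M} {Δ : Session R M V}
    {ℓ : Option (Interaction R M)} {B₁ : Buffer R M} {Δ₁ : Session R M V}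
    (hs : Step B Δ ℓ B₁ Δ₁) (q : R) (hc : Compat p a (Δ q)) (hb : ∃ l, B p q = a :: l) :
    Compat p a (Δ₁ q) ∧ ∃ l, B₁ p q = a :: l := by
  cases hs with
  | @output p₀ q₀ a₀ T₀ B₁ ho h1 h2 =>
      constructor
      · by_cases hq : q = p₀
        · subst hq
          rw [Function.update_self]
          exact compat_canOut hc ho
        · rwa [Function.update_of_ne hq]
      · by_cases hpq : p = p₀ ∧ q = q₀
        · obtain ⟨l, hl⟩ := hb
          obtain ⟨rfl, rfl⟩ := hpq
          exact ⟨l ++ [a₀], by rw [h1, hl]; rfl⟩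
        · rw [h2 p q hpq]; exact hb
  | @input T₀ α B₁ hci h1 h2 =>
      by_cases hq : q = α.receiver
      · subst hq
        by_cases hp : p ∈ α.senders
        · exfalso
          obtain ⟨l, hl⟩ := hb
          have hmsg : α.msg = a := by
            have := h1 p hp
            rw [hl] at this
            injection this with h _
            exact h.symm
          exact compat_canIn_mem hc hci hp hmsg
        · constructor
          · rw [Function.update_self]
            exact compat_canIn_notMem hc hci hp
          · rw [h2 p α.receiver (fun hc' => hp hc'.1)]; exact hb
      · constructor
        · rwa [Function.update_of_ne hq]
        · rw [h2 p q (fun hc' => hq hc'.2)]; exact hb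

lemma blocked {p : R} {a : M} {B : Buffer R M} {Δ : Session R M V} {ψ : Trace R M}
    {B' : Buffer R M} {Δ' : Session R M V}
    (h : Steps B Δ ψ B' Δ') :
    ∀ q, Compat p a (Δ q) → (∃ l, B p q = a :: l) →
      Compat p a (Δ' q) ∧ ∃ l, B' p q = a :: l := by
  induction h with
  | refl => exact fun q hc hb => ⟨hc, hb⟩
  | tau hs _ ih =>
      intro q hc hb
      obtain ⟨hc', hb'⟩ := blocked_step hs q hc hb
      exact ih q hc' hb'
  | act hs _ ih =>
      intro q hc hb
      obtain ⟨hc', hb'⟩ := blocked_step hs q hc hb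
      exact ih q hc' hb'

/-! ### Simulation lemmas -/

lemma mRel_update {Δ₁ Δ₂ : Session R M V} {q : R} {T' U' : PST R M V}
    (hrel : ∀ r, MRel (Δ₁ r) (Δ₂ r)) (h : MRel T' U') :
    ∀ r, MRel ((Function.update Δ₁ q T') r) ((Function.update Δ₂ q U') r) := by
  intro r
  by_cases hr : r = q
  · subst hr; rw [Function.update_self, Function.update_self]; exact h
  · rw [Function.update_of_ne hr, Function.update_of_ne hr]; exact hrel r

lemma sim_fwd_step {B : Buffer R M} {Δ₁ : Session R M V} {ℓ : Option (Interaction R M)}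
    {B₁ : Buffer R M} {Δ₁' : Session R M V}
    (hs : Step B Δ₁ ℓ B₁ Δ₁') (Δ₂ : Session R M V) (hrel : ∀ q, MRel (Δ₁ q) (Δ₂ q)) :
    ∃ Δ₂', Step B Δ₂ ℓ B₁ Δ₂' ∧ ∀ q, MRel (Δ₁' q) (Δ₂' q) := by
  cases hs with
  | @output p₀ q₀ a₀ T₀ B₁ ho h1 h2 =>
      obtain ⟨U', hU, hrel'⟩ := mRel_out_fwd (hrel p₀) ho
      exact ⟨Function.update Δ₂ p₀ U', Step.output B₁ hU h1 h2, mRel_update hrel hrel'⟩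
  | @input T₀ α B₁ hci h1 h2 =>
      obtain ⟨U', hU, hrel'⟩ := mRel_in_fwd (hrel α.receiver) hci
      exact ⟨Function.update Δ₂ α.receiver U', Step.input α B₁ hU h1 h2,
        mRel_update hrel hrel'⟩

lemma sim_bwd_step {B : Buffer R M} {Δ₂ : Session R M V} {ℓ : Option (Interaction R M)}
    {B₁ : Buffer R M} {Δ₂' : Session R M V}
    (hs : Step B Δ₂ ℓ B₁ Δ₂') (Δ₁ : Session R M V) (hrel : ∀ q, MRel (Δ₁ q) (Δ₂ q))
    (hlf : LiveFrom B Δ₁) :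
    ∃ Δ₁', Step B Δ₁ ℓ B₁ Δ₁' ∧ ∀ q, MRel (Δ₁' q) (Δ₂' q) := by
  cases hs with
  | @output p₀ q₀ a₀ T₀ B₁ ho h1 h2 =>
      obtain ⟨T', hT, hrel'⟩ := mRel_out_bwd (hrel p₀) ho
      exact ⟨Function.update Δ₁ p₀ T', Step.output B₁ hT h1 h2, mRel_update hrel hrel'⟩
  | @input T₀ α B₁ hci h1 h2 =>
      rcases mRel_in_bwd (hrel α.receiver) hci with ⟨T', hT, hrel'⟩ | hcpt
      · exact ⟨Function.update Δ₁ α.receiver T', Step.input α B₁ hT h1 h2,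
          mRel_update hrel hrel'⟩
      · exfalso
        obtain ⟨p', hp', hcompat⟩ := hcpt
        obtain ⟨ψ₀, Δ'', hst, _⟩ := hlf [] _ _ Steps.refl
        obtain ⟨_, l', hl'⟩ :=
          blocked hst α.receiver hcompat ⟨B₁ p' α.receiver, h1 p' hp'⟩
        exact absurd hl' (by simp [emptyBuf])

lemma sim_fwd {B : Buffer R M} {Δ₁ : Session R M V} {ψ : Trace R M}
    {B' : Buffer R M} {Δ₁' : Session R M V}
    (h : Steps B Δ₁ ψ B' Δ₁') :
    ∀ Δ₂ : Session R M V, (∀ q, MRel (Δ₁ q) (Δ₂ q)) →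
      ∃ Δ₂', Steps B Δ₂ ψ B' Δ₂' ∧ ∀ q, MRel (Δ₁' q) (Δ₂' q) := by
  induction h with
  | refl => exact fun Δ₂ hrel => ⟨Δ₂, Steps.refl, hrel⟩
  | tau hs _ ih =>
      intro Δ₂ hrel
      obtain ⟨Δ₂m, hstep, hrel'⟩ := sim_fwd_step hs Δ₂ hrel
      obtain ⟨Δ₂', hsteps, hrel''⟩ := ih _ hrel'
      exact ⟨Δ₂', Steps.tau hstep hsteps, hrel''⟩
  | act hs _ ih =>
      intro Δ₂ hrel
      obtain ⟨Δ₂m, hstep, hrel'⟩ := sim_fwd_step hs Δ₂ hrel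
      obtain ⟨Δ₂', hsteps, hrel''⟩ := ih _ hrel'
      exact ⟨Δ₂', Steps.act hstep hsteps, hrel''⟩

lemma sim_bwd {B : Buffer R M} {Δ₂ : Session R M V} {ψ : Trace R M}
    {B' : Buffer R M} {Δ₂' : Session R M V}
    (h : Steps B Δ₂ ψ B' Δ₂') :
    ∀ Δ₁ : Session R M V, (∀ q, MRel (Δ₁ q) (Δ₂ q)) → LiveFrom B Δ₁ →
      ∃ Δ₁', Steps B Δ₁ ψ B' Δ₁' ∧ ∀ q, MRel (Δ₁' q) (Δ₂' q) := by
  induction h with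
  | refl => exact fun Δ₁ hrel _ => ⟨Δ₁, Steps.refl, hrel⟩
  | tau hs _ ih =>
      intro Δ₁ hrel hlf
      obtain ⟨Δ₁m, hstep, hrel'⟩ := sim_bwd_step hs Δ₁ hrel hlf
      obtain ⟨Δ₁', hsteps, hrel''⟩ := ih _ hrel' (liveFrom_step hstep hlf)
      exact ⟨Δ₁', Steps.tau hstep hsteps, hrel''⟩
  | act hs _ ih =>
      intro Δ₁ hrel hlf
      obtain ⟨Δ₁m, hstep, hrel'⟩ := sim_bwd_step hs Δ₁ hrel hlf
      obtain ⟨Δ₁', hsteps, hrel''⟩ := ih _ hrel' (liveFrom_step hstep hlf)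
      exact ⟨Δ₁', Steps.act hstep hsteps, hrel''⟩

lemma ended_transfer_fwd {Δ₁ Δ₂ : Session R M V}
    (hrel : ∀ q, MRel (Δ₁ q) (Δ₂ q)) (h : Ended Δ₁) : Ended Δ₂ :=
  fun q => mRel_done_fwd (hrel q) (h q)

lemma ended_transfer_bwd {Δ₁ Δ₂ : Session R M V}
    (hrel : ∀ q, MRel (Δ₁ q) (Δ₂ q)) (h : Ended Δ₂) : Ended Δ₁ :=
  fun q => mRel_done_bwd (hrel q) (h q)

end MergeAux

/-- merging does not change the traces of a live session:
if `{p:T} ⊎ Δ` is live and `Δ ⋈ Δ'` is defined (with result `Δm`), then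
`tr({p:T} ⊎ Δ) = tr({p:T} ⊎ (Δ ⋈ Δ'))`. -/
theorem merge_preserves_traces
    {R M V : Type} [DecidableEq R] [DecidableEq V]
    (p : R) (T : PST R M V) (Δ Δ' Δm : Session R M V)
    (hT : IsST T)
    (hst : ∀ q, IsST (Δ q)) (hfin : FinDom Δ) (hp : Δ p = PST.done)
    (hst' : ∀ q, IsST (Δ' q)) (hfin' : FinDom Δ') (hp' : Δ' p = PST.done)
    (hlive : Live (Function.update Δ p T))
    (hmerge : ∀ q, q ≠ p → MergeST (Δ q) (Δ' q) (Δm q)) :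
    trS (Function.update Δ p T) = trS (Function.update Δm p T) := by
  have hrel0 : ∀ q, MRel ((Function.update Δ p T) q) ((Function.update Δm p T) q) := by
    intro q
    by_cases hq : q = p
    · subst hq; rw [Function.update_self, Function.update_self]; exact Or.inl rfl
    · rw [Function.update_of_ne hq, Function.update_of_ne hq]
      exact Or.inr ⟨Δ' q, hmerge q hq⟩
  have hliveF : LiveFrom emptyBuf (Function.update Δ p T) := hlive
  have hliveM : Live (Function.update Δm p T) := by
    intro φ B' Δ₂' hst
    obtain ⟨Δ₁', h1, hrel1⟩ := sim_bwd hst _ hrel0 hliveF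
    obtain ⟨ψ, Δ'', h2, hend⟩ := hlive φ B' Δ₁' h1
    obtain ⟨Δ₂'', h3, hrel2⟩ := sim_fwd h2 _ hrel1
    exact ⟨ψ, Δ₂'', h3, ended_transfer_fwd hrel2 hend⟩
  ext φ
  simp only [trS, Set.mem_setOf_eq]
  constructor
  · rintro ⟨_, Δ'', hst, hend⟩
    obtain ⟨Δ₂'', hst', hrel⟩ := sim_fwd hst _ hrel0
    exact ⟨hliveM, Δ₂'', hst', ended_transfer_fwd hrel hend⟩
  · rintro ⟨_, Δ'', hst, hend⟩
    obtain ⟨Δ₁'', hst', hrel⟩ := sim_bwd hst _ hrel0 hliveF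
    exact ⟨hlive, Δ₁'', hst', ended_transfer_bwd hrel hend⟩

end MultiPartySessions
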